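/- Fix an integer N ≥ 3, set θ_i = 2πi/N for i = 0, …, N−1, and suppose δ > 0 satisfies δ · ∑_{i=1}^{N−1} sin²θ_i < 1. Let V₀ > 0 and V_i = 0 for i ≠ 0, and let r : [0, ∞) → ℝ^N be a differentiable solution of the N-dimensional ring system. Then m_y(t) = ∑_{j=0}^{N−1} r_j(t) sin θ_j converges to 0 as t → ∞. -/

import Mathlib

open Filter Real

/-- For the `N`-dimensional ring system (`N ≥ 3`, `θ_i = 2πi/N`) with
`δ ∑_{i=1}^{N-1} sin²θ_i < 1`, input `V₀ > 0` at index `0` and `0`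
elsewhere, the quantity `m_y(t) = ∑_j r_j(t) sin θ_j` converges to `0`
along every solution. -/
theorem stmt11 (N : ℕ) (hN : 3 ≤ N) (δ V₀ : ℝ) (hδ0 : 0 < δ) (hV₀ : 0 < V₀)
    (θ : Fin N → ℝ) (hθ : ∀ i : Fin N, θ i = 2 * π * i / N)
    (hδ : δ * ∑ i ∈ Finset.univ.erase (⟨0, by omega⟩ : Fin N),
      Real.sin (θ i) ^ 2 < 1)
    (V : Fin N → ℝ) (hV0 : V ⟨0, by omega⟩ = V₀)
    (hVi : ∀ i : Fin N, i ≠ ⟨0, by omega⟩ → V i = 0)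
    (r : Fin N → ℝ → ℝ)
    (hr : ∀ i : Fin N, ∀ t ≥ (0 : ℝ), HasDerivAt (r i)
      (-r i t + max (δ * ∑ j, Real.cos (θ i - θ j) * r j t + V i) 0) t) :
    Tendsto (fun t => ∑ j, r j t * Real.sin (θ j)) atTop (nhds 0) := by
  haveI : NeZero N := ⟨by omega⟩
  have hN0 : (N : ℝ) ≠ 0 := by positivity
  -- the zero index
  have hz0 : ((⟨0, by omega⟩ : Fin N)) = 0 := by
    ext; simp
  have hθ0 : θ 0 = 0 := by
    rw [hθ]; simp
  have hVi' : ∀ i : Fin N, i ≠ 0 → V i = 0 := by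
    intro i hi; apply hVi; rw [hz0]; exact hi
  -- trigonometric symmetry facts
  have hval : ∀ j : Fin N, j ≠ 0 → ((-j : Fin N) : ℕ) = N - (j : ℕ) := by
    intro j hj
    rw [Fin.coe_neg]
    have h1 : 0 < (j : ℕ) := by
      rcases Nat.eq_zero_or_pos (j : ℕ) with h | h
      · exact absurd (Fin.ext h) hj
      · exact h
    have h2 : (j : ℕ) < N := j.isLt
    exact Nat.mod_eq_of_lt (by omega)
  have hθneg : ∀ j : Fin N, j ≠ 0 → θ (-j) = 2 * π - θ j := by
    intro j hj
    rw [hθ, hθ, hval j hj]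
    have h2 : (j : ℕ) ≤ N := j.isLt.le
    push_cast [Nat.cast_sub h2]
    field_simp
  have hsin : ∀ j : Fin N, Real.sin (θ (-j)) = - Real.sin (θ j) := by
    intro j
    by_cases hj : j = 0
    · subst hj; rw [neg_zero, hθ0]; simp
    · rw [hθneg j hj, Real.sin_sub, Real.sin_two_pi, Real.cos_two_pi]; ring
  have hcos : ∀ j : Fin N, Real.cos (θ (-j)) = Real.cos (θ j) := by
    intro j
    by_cases hj : j = 0
    · subst hj; rw [neg_zero]
    · rw [hθneg j hj, Real.cos_sub, Real.sin_two_pi, Real.cos_two_pi]; ring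
  have hVneg : ∀ j : Fin N, V (-j) = V j := by
    intro j
    by_cases hj : j = 0
    · subst hj; rw [neg_zero]
    · rw [hVi' _ (neg_ne_zero.mpr hj), hVi' _ hj]
  -- the coupling constant
  set S : ℝ := ∑ i ∈ Finset.univ.erase (⟨0, by omega⟩ : Fin N), Real.sin (θ i) ^ 2 with hS
  have hSsum : (∑ j : Fin N, Real.sin (θ j) ^ 2) = S := by
    rw [hS]
    exact (Finset.sum_erase _ (by rw [hz0, hθ0]; simp)).symm
  set c : ℝ := δ * S with hc
  have hc1 : c < 1 := hδ
  have hS0 : 0 ≤ S := by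
    rw [hS]; exact Finset.sum_nonneg fun i _ => sq_nonneg _
  have hc0 : 0 ≤ c := mul_nonneg hδ0.le hS0
  -- key pointwise inequality
  have key : ∀ ρ : Fin N → ℝ,
      |∑ j, max (δ * ∑ k, Real.cos (θ j - θ k) * ρ k + V j) 0 * Real.sin (θ j)|
        ≤ c * |∑ j, ρ j * Real.sin (θ j)| := by
    intro ρ
    set mx : ℝ := ∑ k, ρ k * Real.cos (θ k) with hmx
    set my : ℝ := ∑ k, ρ k * Real.sin (θ k) with hmy
    set w : Fin N → ℝ := fun j => δ * (Real.cos (θ j) * mx + Real.sin (θ j) * my) + V j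
      with hw
    have hwe : ∀ j, δ * ∑ k, Real.cos (θ j - θ k) * ρ k + V j = w j := by
      intro j
      simp only [hw]
      congr 2
      rw [hmx, hmy, Finset.mul_sum, Finset.mul_sum, ← Finset.sum_add_distrib]
      refine Finset.sum_congr rfl fun k _ => ?_
      rw [Real.cos_sub]; ring
    have hwd : ∀ j, w j - w (-j) = 2 * δ * Real.sin (θ j) * my := by
      intro j
      simp only [hw]
      rw [hsin j, hcos j, hVneg j]; ring
    set φ : Fin N → ℝ := fun j => max (w j) 0 * Real.sin (θ j) with hφ
    have hpair : ∀ j, |φ j + φ (-j)| ≤ 2 * δ * Real.sin (θ j) ^ 2 * |my| := by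
      intro j
      have h1 : φ j + φ (-j) = Real.sin (θ j) * (max (w j) 0 - max (w (-j)) 0) := by
        simp only [hφ]; rw [hsin j]; ring
      rw [h1, abs_mul]
      calc |Real.sin (θ j)| * |max (w j) 0 - max (w (-j)) 0|
          ≤ |Real.sin (θ j)| * |w j - w (-j)| :=
            mul_le_mul_of_nonneg_left (abs_max_sub_max_le_abs _ _ _) (abs_nonneg _)
        _ = |Real.sin (θ j)| * |2 * δ * Real.sin (θ j) * my| := by rw [hwd j]
        _ = 2 * δ * Real.sin (θ j) ^ 2 * |my| := by
            rw [abs_mul, abs_mul, abs_mul, abs_two, abs_of_pos hδ0,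
              ← sq_abs (Real.sin (θ j))]
            ring
    have e1 : ∑ j, φ j = ∑ j, φ (-j) :=
      (Fintype.sum_equiv (Equiv.neg (Fin N)) (fun j => φ (-j)) φ (fun j => rfl)).symm
    have e2 : (2 : ℝ) * ∑ j, φ j = ∑ j, (φ j + φ (-j)) := by
      rw [Finset.sum_add_distrib, ← e1]; ring
    have h2G : (2 : ℝ) * |∑ j, φ j| ≤ 2 * (c * |my|) := by
      calc (2 : ℝ) * |∑ j, φ j| = |∑ j, (φ j + φ (-j))| := by
            rw [← e2, abs_mul, abs_two]
        _ ≤ ∑ j, |φ j + φ (-j)| := Finset.abs_sum_le_sum_abs _ _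
        _ ≤ ∑ j, 2 * δ * Real.sin (θ j) ^ 2 * |my| :=
            Finset.sum_le_sum fun j _ => hpair j
        _ = 2 * (c * |my|) := by
            rw [← Finset.sum_mul, ← Finset.mul_sum, hSsum, hc]; ring
    have hsum : (∑ j, max (δ * ∑ k, Real.cos (θ j - θ k) * ρ k + V j) 0 * Real.sin (θ j))
        = ∑ j, φ j := Finset.sum_congr rfl fun j _ => by rw [hwe j]
    rw [hsum]
    linarith
  -- the solution quantities
  set f : ℝ → ℝ := fun t => ∑ j, r j t * Real.sin (θ j) with hf
  set G : ℝ → ℝ :=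
    fun t => ∑ j, max (δ * ∑ k, Real.cos (θ j - θ k) * r k t + V j) 0 * Real.sin (θ j)
    with hG
  have hGkey : ∀ t : ℝ, |G t| ≤ c * |f t| := fun t => key (fun j => r j t)
  have hfd : ∀ t ≥ (0 : ℝ), HasDerivAt f (-f t + G t) t := by
    intro t ht
    have h1 : HasDerivAt f
        (∑ j, (-r j t + max (δ * ∑ k, Real.cos (θ j - θ k) * r k t + V j) 0)
          * Real.sin (θ j)) t :=
      HasDerivAt.fun_sum fun j _ => (hr j t ht).mul_const _
    convert h1 using 1
    rw [hf, hG]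
    simp only
    rw [← Finset.sum_neg_distrib, ← Finset.sum_add_distrib]
    refine Finset.sum_congr rfl fun j _ => ?_
    ring
  -- Lyapunov function
  set k : ℝ := 2 * (1 - c) with hk
  have hkpos : 0 < k := by rw [hk]; linarith
  set h : ℝ → ℝ := fun t => Real.exp (k * t) * (f t) ^ 2 with hh
  have hhd : ∀ t ≥ (0 : ℝ), HasDerivAt h
      (Real.exp (k * t) * (k * (f t) ^ 2 + 2 * f t * (-f t + G t))) t := by
    intro t ht
    have h1 : HasDerivAt (fun s => Real.exp (k * s)) (Real.exp (k * t) * k) t := by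
      simpa using ((hasDerivAt_id t).const_mul k).exp
    have h2 : HasDerivAt (fun s => (f s) ^ 2) (2 * f t * (-f t + G t)) t := by
      have : HasDerivAt (fun s => (f s) ^ 2) _ t := (hfd t ht).pow 2
      convert this using 1
      push_cast
      ring
    have : HasDerivAt h _ t := h1.mul h2
    convert this using 1
    ring
  have hnonpos : ∀ t ≥ (0 : ℝ),
      Real.exp (k * t) * (k * (f t) ^ 2 + 2 * f t * (-f t + G t)) ≤ 0 := by
    intro t ht
    apply mul_nonpos_of_nonneg_of_nonpos (Real.exp_pos _).le
    have e1 : f t * G t ≤ |f t| * |G t| := by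
      rw [← abs_mul]; exact le_abs_self _
    have e2 : |G t| ≤ c * |f t| := hGkey t
    have e3 : |f t| * |G t| ≤ |f t| * (c * |f t|) :=
      mul_le_mul_of_nonneg_left e2 (abs_nonneg _)
    have e4 : |f t| * (c * |f t|) = c * (f t) ^ 2 := by
      rw [← sq_abs (f t)]; ring
    rw [hk]
    nlinarith [sq_nonneg (f t)]
  have hanti : AntitoneOn h (Set.Ici (0 : ℝ)) := by
    apply antitoneOn_of_deriv_nonpos (convex_Ici 0)
    · exact fun t ht => (hhd t ht).continuousAt.continuousWithinAt
    · intro t ht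
      rw [interior_Ici] at ht
      exact (hhd t ht.le).differentiableAt.differentiableWithinAt
    · intro t ht
      rw [interior_Ici] at ht
      rw [(hhd t ht.le).deriv]
      exact hnonpos t ht.le
  have hbound : ∀ t ≥ (0 : ℝ), |f t| ≤ |f 0| * Real.exp (-(k / 2) * t) := by
    intro t ht
    have h1 : h t ≤ h 0 := hanti (Set.mem_Ici.mpr le_rfl) (Set.mem_Ici.mpr ht) ht
    have h1' : Real.exp (k * t) * (f t) ^ 2 ≤ (f 0) ^ 2 := by
      have : h 0 = (f 0) ^ 2 := by rw [hh]; simp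
      rw [hh] at h1; simpa [this] using h1
    have hsq : (f t) ^ 2 ≤ (|f 0| * Real.exp (-(k / 2) * t)) ^ 2 := by
      have hrw : (|f 0| * Real.exp (-(k / 2) * t)) ^ 2
          = (f 0) ^ 2 * Real.exp (-(k * t)) := by
        rw [mul_pow, sq_abs, pow_two (Real.exp (-(k / 2) * t)), ← Real.exp_add]
        congr 1
        ring
      rw [hrw]
      have hp := Real.exp_pos (k * t)
      have hinv : Real.exp (-(k * t)) * Real.exp (k * t) = 1 := by
        rw [← Real.exp_add]; simp
      nlinarith [Real.exp_pos (-(k * t)), sq_nonneg (f t)]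
    calc |f t| = Real.sqrt ((f t) ^ 2) := (Real.sqrt_sq_eq_abs _).symm
      _ ≤ Real.sqrt ((|f 0| * Real.exp (-(k / 2) * t)) ^ 2) := Real.sqrt_le_sqrt hsq
      _ = |f 0| * Real.exp (-(k / 2) * t) := by
          rw [Real.sqrt_sq (by positivity)]
  apply squeeze_zero_norm' (a := fun t => |f 0| * Real.exp (-(k / 2) * t))
  · filter_upwards [eventually_ge_atTop (0 : ℝ)] with t ht
    simpa [Real.norm_eq_abs] using hbound t ht
  · have hlin : Tendsto (fun t : ℝ => (k / 2) * t) atTop atTop :=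
      Tendsto.const_mul_atTop (by positivity) tendsto_id
    have hexp : Tendsto (fun t : ℝ => Real.exp (-(k / 2) * t)) atTop (nhds 0) := by
      have := Real.tendsto_exp_neg_atTop_nhds_zero.comp hlin
      simpa [Function.comp_def, neg_mul] using this
    simpa using hexp.const_mul (|f 0|)
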